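/- Let f : ℝ^N → ℝ be convex and differentiable, and β-smooth along coordinate directions, i.e. f(λ + η e_k) ≤ f(λ) + η ∂_k f(λ) + βη²/2 for all λ, η, k. Let λ be a minimizer of f over vectors supported on a set I ⊆ [N], let λ̄ be supported on Ī ⊆ [N] with f(λ) > f(λ̄), and set s = ‖λ̄‖₁. Suppose k satisfies |∂_k f(λ)| ≥ (1−τ) max_j |∂_j f(λ)| for some τ ∈ [0,1). Then there exist η ∈ ℝ and a sign choice such that f(λ) − f(λ + η e_k) ≥ (f(λ) − f(λ̄))² (1−τ)² / (2βs²). -/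

import Mathlib

open Filter

lemma convexOn_grad_le {N : ℕ} (f : EuclideanSpace ℝ (Fin N) → ℝ)
    (hconv : ConvexOn ℝ Set.univ f) (x g0 v : EuclideanSpace ℝ (Fin N))
    (hg : HasGradientAt f g0 x) :
    (inner ℝ g0 v : ℝ) ≤ f (x + v) - f x := by
  have hc : HasDerivAt (fun t : ℝ => x + t • v) v 0 := by
    simpa using ((hasDerivAt_id (0 : ℝ)).smul_const v).const_add x
  have hφ : HasDerivAt (fun t : ℝ => f (x + t • v)) (inner ℝ g0 v : ℝ) 0 := by
    have h := hg.hasFDerivAt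
    have hx : x = x + (0 : ℝ) • v := by simp
    have h2 := HasFDerivAt.comp_hasDerivAt 0 (hx ▸ h) hc
    simp at h2
    exact h2
  rw [hasDerivAt_iff_tendsto_slope] at hφ
  have hφ' : Tendsto (slope (fun t : ℝ => f (x + t • v)) 0) (nhdsWithin 0 (Set.Ioi 0))
      (nhds (inner ℝ g0 v : ℝ)) :=
    hφ.mono_left (nhdsWithin_mono _ (fun t ht => ne_of_gt ht))
  refine le_of_tendsto hφ' ?_
  filter_upwards [Ioo_mem_nhdsGT_of_mem (by norm_num : (0:ℝ) ∈ Set.Ico 0 1)] with t ht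
  obtain ⟨ht0, ht1⟩ := ht
  have hcv := hconv.2 (Set.mem_univ x) (Set.mem_univ (x + v))
      (by linarith : (0:ℝ) ≤ 1 - t) (le_of_lt ht0) (by ring)
  have hxt : (1 - t) • x + t • (x + v) = x + t • v := by module
  rw [hxt] at hcv
  have hslope : slope (fun t : ℝ => f (x + t • v)) 0 t = (f (x + t • v) - f x) / t := by
    simp [slope_def_field]
  rw [hslope, div_le_iff₀ ht0]
  simp only [smul_eq_mul] at hcv
  nlinarith

theorem geco_key_lemma (N : ℕ) (f : EuclideanSpace ℝ (Fin N) → ℝ)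
    (g : EuclideanSpace ℝ (Fin N) → EuclideanSpace ℝ (Fin N))
    (hconv : ConvexOn ℝ Set.univ f)
    (hgrad : ∀ x, HasGradientAt f (g x) x)
    (β : ℝ) (hβ : 0 < β)
    (hsmooth : ∀ (x : EuclideanSpace ℝ (Fin N)) (η : ℝ) (k : Fin N),
      f (x + η • EuclideanSpace.single k 1) ≤ f x + η * g x k + β * η ^ 2 / 2)
    (I Ibar : Finset (Fin N)) (lam lbar : EuclideanSpace ℝ (Fin N))
    (hlamsupp : ∀ j, j ∉ I → lam j = 0)
    (hmin : ∀ μ : EuclideanSpace ℝ (Fin N), (∀ j, j ∉ I → μ j = 0) → f lam ≤ f μ)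
    (hlbarsupp : ∀ j, j ∉ Ibar → lbar j = 0)
    (hgap : f lbar < f lam)
    (s : ℝ) (hs : s = ∑ j, |lbar j|)
    (τ : ℝ) (hτ0 : 0 ≤ τ) (hτ1 : τ < 1)
    (k : Fin N) (hk : ∀ j, (1 - τ) * |g lam j| ≤ |g lam k|) :
    ∃ η : ℝ, f lam - f (lam + η • EuclideanSpace.single k 1) ≥
      (f lam - f lbar) ^ 2 * (1 - τ) ^ 2 / (2 * β * s ^ 2) := by
  -- gradient vanishes on I
  have gI : ∀ j ∈ I, g lam j = 0 := by
    intro j hj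
    set a := g lam j with ha
    have hsupp : ∀ i, i ∉ I →
        ((lam + (-(a/β)) • EuclideanSpace.single j (1:ℝ)) : EuclideanSpace ℝ (Fin N)) i = 0 := by
      intro i hi
      have hij : i ≠ j := fun h => hi (h ▸ hj)
      simp [PiLp.add_apply, PiLp.smul_apply, hlamsupp i hi, EuclideanSpace.single_apply, hij]
    have h1 := hmin _ hsupp
    have h2 := hsmooth lam (-(a/β)) j
    have h3 : -(a/β) * a + β * (-(a/β)) ^ 2 / 2 = -(a^2/(2*β)) := by
      field_simp; ring
    have h4 : 0 ≤ -(a^2/(2*β)) := by linarith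
    have h5 : a ^ 2 ≤ 0 := by
      have hm := mul_le_mul_of_nonneg_right (show a^2/(2*β) ≤ 0 by linarith)
        (by positivity : (0:ℝ) ≤ 2*β)
      rw [div_mul_cancel₀ _ (by positivity : (2*β : ℝ) ≠ 0)] at hm
      linarith
    have h6 : a ^ 2 = 0 := le_antisymm h5 (sq_nonneg a)
    exact pow_eq_zero_iff two_ne_zero |>.mp h6
  -- convexity inequality
  have hcg := convexOn_grad_le f hconv lam (g lam) (lbar - lam) (hgrad lam)
  rw [add_sub_cancel] at hcg
  have hinner : (inner ℝ (g lam) (lbar - lam) : ℝ) = ∑ j, g lam j * lbar j := by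
    rw [PiLp.inner_apply]
    apply Finset.sum_congr rfl
    intro j _
    by_cases hj : j ∈ I
    · simp [gI j hj]
    · simp [PiLp.sub_apply, hlamsupp j hj, RCLike.inner_apply, starRingEnd_apply]
      ring
  rw [hinner] at hcg
  -- bound
  have hbound : (1 - τ) * (f lam - f lbar) ≤ |g lam k| * s := by
    have h1 : f lam - f lbar ≤ ∑ j, |g lam j| * |lbar j| := by
      have : -(∑ j, g lam j * lbar j) ≤ ∑ j, |g lam j| * |lbar j| := by
        rw [← Finset.sum_neg_distrib]
        apply Finset.sum_le_sum
        intro j _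
        rw [← abs_mul]
        exact neg_le_abs _
      linarith
    have h2 : (1 - τ) * ∑ j, |g lam j| * |lbar j| ≤ |g lam k| * s := by
      rw [hs, Finset.mul_sum, Finset.mul_sum]
      apply Finset.sum_le_sum
      intro j _
      have := hk j
      have habs : (0:ℝ) ≤ |lbar j| := abs_nonneg _
      nlinarith
    nlinarith [abs_nonneg (g lam k)]
  -- s > 0
  have hspos : 0 < s := by
    rcases lt_or_eq_of_le (by rw [hs]; positivity : (0:ℝ) ≤ s) with h | h
    · exact h
    · exfalso
      have hz : ∀ j, lbar j = 0 := by
        intro j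
        have := (Finset.sum_eq_zero_iff_of_nonneg (fun i _ => abs_nonneg (lbar i))).1
          (by rw [← hs, ← h]) j (Finset.mem_univ j)
        exact abs_eq_zero.1 this
      have := hmin lbar (fun j _ => hz j)
      linarith
  -- choose η
  refine ⟨-(g lam k / β), ?_⟩
  have h2 := hsmooth lam (-(g lam k / β)) k
  set a := g lam k with ha
  have e : f lam + -(a/β) * a + β * (-(a/β)) ^ 2 / 2 = f lam - a^2/(2*β) := by
    field_simp; ring
  have hstep : a ^ 2 / (2 * β) ≤ f lam - f (lam + (-(a / β)) • EuclideanSpace.single k 1) := by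
    linarith [h2, e]
  have hsq : (f lam - f lbar) ^ 2 * (1 - τ) ^ 2 ≤ a ^ 2 * s ^ 2 := by
    have h1 : 0 ≤ (1 - τ) * (f lam - f lbar) := by nlinarith
    nlinarith [abs_nonneg a, sq_abs a, hbound]
  rw [ge_iff_le, div_le_iff₀ (by positivity)]
  have h3 := mul_le_mul_of_nonneg_right hstep (by positivity : (0:ℝ) ≤ 2*β*s^2)
  have h4 : a^2/(2*β)*(2*β*s^2) = a^2*s^2 := by field_simp
  linarith [hsq]
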